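/- In a semi-abelian category, given a commutative square with horizontal regular epimorphisms f' : A' ↠ B' and f : A ↠ B and vertical maps v : A' → A, w : B' → B, the square is a regular pushout (the comparison map (v,f') : A' → A ×_B B' is a regular epimorphism) if and only if the induced morphism u : K[f'] → K[f] between the kernels of f' and f is a regular epimorphism. -/

import Mathlib

universe w v u
noncomputable section
open CategoryTheory CategoryTheory.Limits CategoryTheory.Subobject Opposite
local notation "⦋" n "⦌" => SimplexCategory.mk n
local notation:1000 X " _⦋" n "⦌" => CategoryTheory.Functor.obj X (Opposite.op (SimplexCategory.mk n))

namespace SemiAbPaper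
section Base


variable {C : Type u} [Category.{v} C]

/-- A regular epimorphism (propositional form). -/
def IsRegEpi {X Y : C} (f : X ⟶ Y) : Prop := Nonempty (RegularEpi f)

/-- A regular projective object. -/
def RegularProjective (P : C) : Prop :=
  ∀ {X Y : C} (e : X ⟶ Y), IsRegEpi e → ∀ g : P ⟶ Y, ∃ h : P ⟶ X, h ≫ e = g

/-- `C` has enough regular projectives. -/
def EnoughRegularProjectives (C : Type u) [Category.{v} C] : Prop :=
  ∀ X : C, ∃ (P : C) (p : P ⟶ X), RegularProjective P ∧ IsRegEpi p

/-- A regular category: finitely complete, coequalizers of kernel pairs,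
regular epimorphisms stable under pullback. -/
class IsRegularCategory (C : Type u) [Category.{v} C] [HasFiniteLimits C] : Prop where
  hasCoequalizersOfKernelPairs :
    ∀ {X Y : C} (f : X ⟶ Y), HasColimit (parallelPair (pullback.fst f f) (pullback.snd f f))
  regularEpiPullbackStable :
    ∀ {X Y Z : C} (f : X ⟶ Y) (g : Z ⟶ Y), IsRegEpi f → IsRegEpi (pullback.snd f g)

/-- A semi-abelian category (relative to ambient pointedness and finite completeness):
Barr-exact, Bourn-protomodular, with binary coproducts and a zero object. -/
class IsSemiAbelian (C : Type u) [Category.{v} C] [HasZeroMorphisms C] [HasFiniteLimits C] :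
    Prop where
  hasZeroObject : HasZeroObject C
  hasBinaryCoproducts : HasBinaryCoproducts C
  hasCoequalizersOfKernelPairs :
    ∀ {X Y : C} (f : X ⟶ Y), HasColimit (parallelPair (pullback.fst f f) (pullback.snd f f))
  regularEpiPullbackStable :
    ∀ {X Y Z : C} (f : X ⟶ Y) (g : Z ⟶ Y), IsRegEpi f → IsRegEpi (pullback.snd f g)
  /-- Barr-exactness: every internal equivalence relation is a kernel pair. -/
  exactEquivalenceRelations :
    ∀ {R X : C} (r₀ r₁ : R ⟶ X),
      (∀ {T : C} (a b : T ⟶ R), a ≫ r₀ = b ≫ r₀ → a ≫ r₁ = b ≫ r₁ → a = b) →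
      (∀ T : C, _root_.Equivalence fun x y : T ⟶ X => ∃ t : T ⟶ R, t ≫ r₀ = x ∧ t ≫ r₁ = y) →
      ∃ (Y : C) (f : X ⟶ Y), IsKernelPair f r₀ r₁
  /-- Bourn-protomodularity: the Short Five Lemma. -/
  protomodular :
    ∀ {E' B' E B : C} (p' : E' ⟶ B') (p : E ⟶ B), IsRegEpi p' → IsRegEpi p →
      ∀ (v : E' ⟶ E) (w : B' ⟶ B), p' ≫ w = v ≫ p →
      ∀ u : kernel p' ⟶ kernel p, u ≫ kernel.ι p = kernel.ι p' ≫ v →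
      IsIso u → IsIso w → IsIso v


end Base

section MoorePart

variable {C : Type u} [Category.{v} C] [HasZeroMorphisms C] [HasFiniteLimits C]

namespace Moore

variable (X : SimplicialObject C)

/-- The `n`-th object of the Moore complex of `X`:
the intersection of the kernels of `∂ᵢ : Xₙ ⟶ X_{n-1}` for `0 ≤ i ≤ n-1`. -/
def NSub : ∀ n : ℕ, Subobject (X _⦋n⦌)
  | 0 => ⊤
  | n + 1 => Finset.univ.inf fun k : Fin (n + 1) => kernelSubobject (X.δ k.castSucc)

/-- The `n`-th object of the Moore complex, as an object of `C`. -/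
def NObj (n : ℕ) : C := (NSub X n : C)

theorem arrow_comp_δ_castSucc (n : ℕ) (i : Fin (n + 1)) :
    (NSub X (n + 1)).arrow ≫ X.δ i.castSucc = 0 := by
  show (Finset.univ.inf fun k : Fin (n + 1) =>
      kernelSubobject (X.δ k.castSucc)).arrow ≫ X.δ i.castSucc = 0
  rw [← factorThru_arrow _ _ (finset_inf_arrow_factors Finset.univ
      (fun k : Fin (n + 1) => kernelSubobject (X.δ k.castSucc)) i (Finset.mem_univ _)),
    Category.assoc, kernelSubobject_arrow_comp, comp_zero]

/-- The differential `dₙ₊₁ : Nₙ₊₁X ⟶ NₙX` of the Moore complex, induced by the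
last face `∂ₙ₊₁`. -/
def MooreD : ∀ n : ℕ, NObj X (n + 1) ⟶ NObj X n
  | 0 => (NSub X 1).arrow ≫ X.δ (Fin.last 1) ≫
      (inv (⊤ : Subobject (X _⦋0⦌)).arrow : X _⦋0⦌ ⟶ ((⊤ : Subobject (X _⦋0⦌)) : C))
  | n + 1 =>
    factorThru _ ((NSub X (n + 2)).arrow ≫ X.δ (Fin.last (n + 2))) (by
      refine (finset_inf_factors _).mpr fun i _ => ?_
      apply kernelSubobject_factors
      show ((NSub X (n + 2)).arrow ≫ X.δ (Fin.last (n + 2))) ≫ X.δ i.castSucc = 0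
      rw [Category.assoc,
        show X.δ (Fin.last (n + 2)) = X.δ ((Fin.last (n + 1)).succ) from by rw [Fin.succ_last],
        X.δ_comp_δ (Fin.le_last i.castSucc), ← Category.assoc,
        arrow_comp_δ_castSucc, zero_comp])

theorem d_squared (n : ℕ) : MooreD X (n + 1) ≫ MooreD X n = 0 := by
  rcases n with _ | n <;> dsimp [MooreD]
  · erw [factorThru_arrow_assoc,
      show X.δ (Fin.last 2) = X.δ ((Fin.last 1).succ) from by rw [Fin.succ_last],
      Category.assoc, X.δ_comp_δ_assoc (le_refl (Fin.last 1)), ← Category.assoc,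
      arrow_comp_δ_castSucc, zero_comp]
  · apply (cancel_mono (NSub X (n + 1)).arrow).1
    erw [Category.assoc, factorThru_arrow, factorThru_arrow_assoc,
      show X.δ (Fin.last (n + 3)) = X.δ ((Fin.last (n + 2)).succ) from by rw [Fin.succ_last],
      Category.assoc, X.δ_comp_δ (le_refl (Fin.last (n + 2))), ← Category.assoc,
      arrow_comp_δ_castSucc, zero_comp, zero_comp]

variable [HasCokernels C]

/-- The homology `HₙX` of the Moore complex of `X`:
the cokernel of the factorization of `dₙ₊₁` through the kernel of `dₙ`. -/
def H : ℕ → C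
  | 0 => cokernel (MooreD X 0)
  | n + 1 => cokernel (kernel.lift (MooreD X n) (MooreD X (n + 1)) (d_squared X n))

/-- The object of `n`-cycles `ZₙX = ⋂_{i ∈ [n]} K[∂ᵢ]`
(realized as `X₀` for `n = 0` and as the kernel of `dₙ` for `n ≥ 1`). -/
def Z : ℕ → C
  | 0 => X _⦋0⦌
  | n + 1 => kernel (MooreD X n)

/-- The monomorphism `ZₙX ⟶ Xₙ`. -/
def zArrow : ∀ n : ℕ, Z X n ⟶ X _⦋n⦌
  | 0 => 𝟙 _
  | n + 1 => kernel.ι (MooreD X n) ≫ (NSub X (n + 1)).arrow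

/-- The canonical quotient map `qₙ : ZₙX ⟶ HₙX`. -/
def q : ∀ n : ℕ, Z X n ⟶ H X n
  | 0 => (inv (⊤ : Subobject (X _⦋0⦌)).arrow : X _⦋0⦌ ⟶ ((⊤ : Subobject (X _⦋0⦌)) : C)) ≫
      cokernel.π (MooreD X 0)
  | n + 1 => cokernel.π (kernel.lift (MooreD X n) (MooreD X (n + 1)) (d_squared X n))

end Moore

end MoorePart

section NablaPart

variable {C : Type u} [Category.{v} C] [HasFiniteLimits C]

namespace Nabla

/-- Pairs `i < j` in `[n+2]`. -/
def PairIdx (n : ℕ) : Type := {p : Fin (n + 3) × Fin (n + 3) // p.1 < p.2}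

instance (n : ℕ) : Fintype (PairIdx n) := by unfold PairIdx; infer_instance

variable (X : SimplicialObject C)

/-- The object `∇ₙX` of `n`-cycles: `∇₀X = X₀ × X₀`, and for `n ≥ 1`, the subobject of
`Xₙ^{n+2}` of tuples `(x₀, …, x_{n+1})` with `∂ᵢ ∘ xⱼ = ∂_{j-1} ∘ xᵢ` for `i < j` in `[n+1]`. -/
def obj : ℕ → C
  | 0 => Limits.prod (X _⦋0⦌) (X _⦋0⦌)
  | n + 1 =>
    equalizer
      (Pi.lift fun p : PairIdx n =>
        Pi.π (fun _ : Fin (n + 3) => X _⦋n + 1⦌) p.1.2 ≫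
          X.δ (⟨p.1.1, by
            have h1 : (p.1.1 : ℕ) < (p.1.2 : ℕ) := p.2
            have h2 : (p.1.2 : ℕ) < n + 3 := p.1.2.isLt
            omega⟩ : Fin (n + 2)))
      (Pi.lift fun p : PairIdx n =>
        Pi.π (fun _ : Fin (n + 3) => X _⦋n + 1⦌) p.1.1 ≫
          X.δ (⟨(p.1.2 : ℕ) - 1, by
            have h2 : (p.1.2 : ℕ) < n + 3 := p.1.2.isLt
            omega⟩ : Fin (n + 2)))

/-- The projection `prᵢ : ∇ₙX ⟶ Xₙ`. -/
def pr : ∀ (n : ℕ) (_ : Fin (n + 2)), obj X n ⟶ X _⦋n⦌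
  | 0, i => if i = 0 then Limits.prod.fst else Limits.prod.snd
  | n + 1, i => equalizer.ι _ _ ≫ Pi.π (fun _ : Fin (n + 3) => X _⦋n + 1⦌) i

/-- The object `∇ₙ(X⁻)`, where `X⁻` is the shifted simplicial object with
`(X⁻)ₙ = X_{n+1}` and `∂ᵢ⁻ = ∂_{i+1}`. -/
def shiftObj : ℕ → C
  | 0 => Limits.prod (X _⦋1⦌) (X _⦋1⦌)
  | n + 1 =>
    equalizer
      (Pi.lift fun p : PairIdx n =>
        Pi.π (fun _ : Fin (n + 3) => X _⦋n + 2⦌) p.1.2 ≫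
          X.δ (⟨(p.1.1 : ℕ) + 1, by
            have h1 : (p.1.1 : ℕ) < (p.1.2 : ℕ) := p.2
            have h2 : (p.1.2 : ℕ) < n + 3 := p.1.2.isLt
            omega⟩ : Fin (n + 3)))
      (Pi.lift fun p : PairIdx n =>
        Pi.π (fun _ : Fin (n + 3) => X _⦋n + 2⦌) p.1.1 ≫
          X.δ (⟨(p.1.2 : ℕ), by
            have h2 : (p.1.2 : ℕ) < n + 3 := p.1.2.isLt
            omega⟩ : Fin (n + 3)))

/-- The projection `prᵢ : ∇ₙ(X⁻) ⟶ X_{n+1}`. -/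
def shiftPr : ∀ (n : ℕ) (_ : Fin (n + 2)), shiftObj X n ⟶ X _⦋n + 1⦌
  | 0, i => if i = 0 then Limits.prod.fst else Limits.prod.snd
  | n + 1, i => equalizer.ι _ _ ≫ Pi.π (fun _ : Fin (n + 3) => X _⦋n + 2⦌) i

end Nabla

end NablaPart

section HornPart

variable {C : Type u} [Category.{v} C]


/-- An `(n+1, k)`-horn of a simplicial object `A` with vertex of definition `X`:
a family `xᵢ : X ⟶ Aₙ` (`i ≠ k`) with `∂ᵢ ∘ xⱼ = ∂_{j-1} ∘ xᵢ` for `i < j`, `i, j ≠ k`. -/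
structure HornData (A : SimplicialObject C) (n : ℕ) (k : Fin (n + 2)) (X : C) where
  x : ∀ i : Fin (n + 2), i ≠ k → (X ⟶ A _⦋n⦌)
  compat : ∀ (m : ℕ) (hm : n = m + 1) (i j : Fin (n + 2)) (hi : i ≠ k) (hj : j ≠ k)
      (hij : (i : ℕ) < (j : ℕ)),
      x j hj ≫ eqToHom (by rw [hm]) ≫ A.δ (⟨(i : ℕ), by
          have := j.isLt; omega⟩ : Fin (m + 2)) =
      x i hi ≫ eqToHom (by rw [hm]) ≫ A.δ (⟨(j : ℕ) - 1, by
          have := j.isLt; omega⟩ : Fin (m + 2))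

/-- `A` is Kan (internally, up to regular epimorphism). -/
def IsKanObject (A : SimplicialObject C) : Prop :=
  ∀ (n : ℕ) (k : Fin (n + 2)) (X : C) (h : HornData A n k X),
    ∃ (Y : C) (p : Y ⟶ X), IsRegEpi p ∧
      ∃ a : Y ⟶ A _⦋n + 1⦌, ∀ (i : Fin (n + 2)) (hi : i ≠ k), a ≫ A.δ i = p ≫ h.x i hi

/-- `f : A ⟶ B` is a Kan fibration (internally, up to regular epimorphism). -/
def IsKanFibration {A B : SimplicialObject C} (f : A ⟶ B) : Prop :=
  ∀ (n : ℕ) (k : Fin (n + 2)) (X : C) (h : HornData A n k X) (b : X ⟶ B _⦋n + 1⦌),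
    (∀ (i : Fin (n + 2)) (hi : i ≠ k), b ≫ B.δ i = h.x i hi ≫ f.app (op ⦋n⦌)) →
    ∃ (Y : C) (p : Y ⟶ X), IsRegEpi p ∧
      ∃ a : Y ⟶ A _⦋n + 1⦌, a ≫ f.app (op ⦋n + 1⦌) = p ≫ b ∧
        ∀ (i : Fin (n + 2)) (hi : i ≠ k), a ≫ A.δ i = p ≫ h.x i hi

/-- A simplicial set (simplicial object of `Type`) is a Kan complex. -/
def IsKanSSet (K : SimplicialObject (Type w)) : Prop :=
  ∀ (n : ℕ) (k : Fin (n + 2)) (x : ∀ i : Fin (n + 2), i ≠ k → K _⦋n⦌),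
    (∀ (m : ℕ) (hm : n = m + 1) (i j : Fin (n + 2)) (hi : i ≠ k) (hj : j ≠ k)
      (hij : (i : ℕ) < (j : ℕ)),
      K.δ (⟨(i : ℕ), by have := j.isLt; omega⟩ : Fin (m + 2)) (_root_.cast (show K _⦋n⦌ = K _⦋m+1⦌ by rw [hm]) (x j hj)) =
      K.δ (⟨(j : ℕ) - 1, by have := j.isLt; omega⟩ : Fin (m + 2))
        (_root_.cast (show K _⦋n⦌ = K _⦋m+1⦌ by rw [hm]) (x i hi))) →
    ∃ y : K _⦋n + 1⦌, ∀ (i : Fin (n + 2)) (hi : i ≠ k), K.δ i y = x i hi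

/-- A map of simplicial sets is a Kan fibration. -/
def IsKanFibrationSSet {K L : SimplicialObject (Type w)} (g : K ⟶ L) : Prop :=
  ∀ (n : ℕ) (k : Fin (n + 2)) (x : ∀ i : Fin (n + 2), i ≠ k → K _⦋n⦌),
    (∀ (m : ℕ) (hm : n = m + 1) (i j : Fin (n + 2)) (hi : i ≠ k) (hj : j ≠ k)
      (hij : (i : ℕ) < (j : ℕ)),
      K.δ (⟨(i : ℕ), by have := j.isLt; omega⟩ : Fin (m + 2)) (_root_.cast (show K _⦋n⦌ = K _⦋m+1⦌ by rw [hm]) (x j hj)) =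
      K.δ (⟨(j : ℕ) - 1, by have := j.isLt; omega⟩ : Fin (m + 2))
        (_root_.cast (show K _⦋n⦌ = K _⦋m+1⦌ by rw [hm]) (x i hi))) →
    ∀ b : L _⦋n + 1⦌,
      (∀ (i : Fin (n + 2)) (hi : i ≠ k), L.δ i b = g.app (op ⦋n⦌) (x i hi)) →
      ∃ a : K _⦋n + 1⦌, g.app (op ⦋n + 1⦌) a = b ∧
        ∀ (i : Fin (n + 2)) (hi : i ≠ k), K.δ i a = x i hi

/-- The simplicial set `hom(P, A)`. -/
def homSimplicial (P : C) (A : SimplicialObject C) : SimplicialObject (Type v) :=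
  A ⋙ coyoneda.obj (op P)

/-- The map of simplicial sets `hom(P, f)`. -/
def homSimplicialMap (P : C) {A B : SimplicialObject C} (f : A ⟶ B) :
    homSimplicial P A ⟶ homSimplicial P B :=
  Functor.whiskerRight f (coyoneda.obj (op P))


end HornPart

section SSetPart


variable {K L : SimplicialObject (Type w)}

/-- The iterated degeneracy `σ₀ⁿ(x)` of a vertex `x`. -/
def bpt (K : SimplicialObject (Type w)) (x : K _⦋0⦌) : ∀ n : ℕ, K _⦋n⦌
  | 0 => x
  | n + 1 => K.σ (0 : Fin (n + 1)) (bpt K x n)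

/-- `Zₙ(K, x)`: the `n`-simplices all of whose faces are the basepoint. -/
def SZ (K : SimplicialObject (Type w)) (x : K _⦋0⦌) : ℕ → Type w
  | 0 => K _⦋0⦌
  | n + 1 => { z : K.obj (op (SimplexCategory.mk (n + 1))) // ∀ i : Fin (n + 2), K.δ i z = bpt K x n }

/-- The underlying `n`-simplex of an element of `Zₙ(K, x)`. -/
def szVal {K : SimplicialObject (Type w)} {x : K _⦋0⦌} : ∀ {n : ℕ}, SZ K x n → K _⦋n⦌
  | 0, z => z
  | _ + 1, z => z.1

/-- The homotopy relation on `Zₙ(K, x)`: `z ∼ z'` iff there is `y ∈ K_{n+1}` with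
`∂ᵢ(y) = x` for `i < n`, `∂ₙ(y) = z` and `∂_{n+1}(y) = z'`. -/
def hRel (K : SimplicialObject (Type w)) (x : K _⦋0⦌) (n : ℕ) (z z' : SZ K x n) : Prop :=
  ∃ y : K _⦋n + 1⦌,
    (∀ i : Fin (n + 2), (i : ℕ) < n → K.δ i y = bpt K x n) ∧
    K.δ (⟨n, by omega⟩ : Fin (n + 2)) y = szVal z ∧
    K.δ (Fin.last (n + 1)) y = szVal z'

/-- The homotopy "group" `πₙ(K, x)` as a quotient set. -/
def piSet (K : SimplicialObject (Type w)) (x : K _⦋0⦌) (n : ℕ) : Type w :=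
  Quot (hRel K x n)

theorem δ_app (g : K ⟶ L) {n : ℕ} (i : Fin (n + 2)) (z : K _⦋n + 1⦌) :
    L.δ i (g.app (op ⦋n + 1⦌) z) = g.app (op ⦋n⦌) (K.δ i z) := by
  have := (NatTrans.naturality_apply g ((SimplexCategory.δ i).op) z).symm
  simpa [SimplicialObject.δ] using this.symm

theorem σ_app (g : K ⟶ L) {n : ℕ} (i : Fin (n + 1)) (z : K _⦋n⦌) :
    L.σ i (g.app (op ⦋n⦌) z) = g.app (op ⦋n + 1⦌) (K.σ i z) := by
  have := (NatTrans.naturality_apply g ((SimplexCategory.σ i).op) z).symm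
  simpa [SimplicialObject.σ] using this.symm

theorem bpt_app (g : K ⟶ L) (x : K _⦋0⦌) :
    ∀ n : ℕ, g.app (op ⦋n⦌) (bpt K x n) = bpt L (g.app (op ⦋0⦌) x) n
  | 0 => rfl
  | n + 1 => by rw [bpt, bpt, ← bpt_app g x n, σ_app]

/-- The map `Zₙ(K, x) → Zₙ(L, g(x))` induced by `g : K ⟶ L`. -/
def szMap (g : K ⟶ L) (x : K _⦋0⦌) : ∀ n : ℕ, SZ K x n → SZ L (g.app (op ⦋0⦌) x) n
  | 0, z => g.app (op ⦋0⦌) z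
  | n + 1, z => ⟨g.app (op ⦋n + 1⦌) z.1, fun i => by
      rw [δ_app, z.2 i, bpt_app]⟩

theorem szVal_szMap (g : K ⟶ L) (x : K _⦋0⦌) :
    ∀ (n : ℕ) (z : SZ K x n), szVal (szMap g x n z) = g.app (op ⦋n⦌) (szVal z)
  | 0, _ => rfl
  | _ + 1, _ => rfl

/-- The map `πₙ(K, x) → πₙ(L, g(x))` induced by `g : K ⟶ L`. -/
def piMap (g : K ⟶ L) (x : K _⦋0⦌) (n : ℕ) :
    piSet K x n → piSet L (g.app (op ⦋0⦌) x) n :=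
  Quot.map (szMap g x n) (by
    rintro z z' ⟨y, h1, h2, h3⟩
    refine ⟨g.app (op ⦋n + 1⦌) y, fun i hi => by rw [δ_app, h1 i hi, bpt_app], ?_, ?_⟩
    · rw [δ_app, h2, szVal_szMap]
    · rw [δ_app, h3, szVal_szMap])

/-- `g : K ⟶ L` is a weak equivalence of simplicial sets: it induces bijections on
all homotopy groups at all basepoints. -/
def IsWeakEquivalenceSSet (g : K ⟶ L) : Prop :=
  ∀ (n : ℕ) (x : K _⦋0⦌), Function.Bijective (piMap g x n)


end SSetPart


section HMapPart
variable {C : Type u} [Category.{v} C] [HasZeroMorphisms C] [HasFiniteLimits C] [HasCokernels C]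

/-- The data of the morphisms induced by a simplicial morphism `f : A ⟶ B` on Moore
complexes, on cycles, and on homology; each component is uniquely determined by the
stated compatibility. -/
structure HMapData {A B : SimplicialObject C} (f : A ⟶ B) where
  ν : ∀ n : ℕ, Moore.NObj A n ⟶ Moore.NObj B n
  hν : ∀ n : ℕ, ν n ≫ (Moore.NSub B n).arrow = (Moore.NSub A n).arrow ≫ f.app (op ⦋n⦌)
  κ : ∀ n : ℕ, kernel (Moore.MooreD A n) ⟶ kernel (Moore.MooreD B n)
  hκ : ∀ n : ℕ, κ n ≫ kernel.ι (Moore.MooreD B n) = kernel.ι (Moore.MooreD A n) ≫ ν (n + 1)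
  η : ∀ n : ℕ, Moore.H A n ⟶ Moore.H B n
  hη₀ : cokernel.π (Moore.MooreD A 0) ≫ η 0 = ν 0 ≫ cokernel.π (Moore.MooreD B 0)
  hη : ∀ n : ℕ,
    cokernel.π (kernel.lift (Moore.MooreD A n) (Moore.MooreD A (n + 1)) (Moore.d_squared A n)) ≫
        η (n + 1) =
      κ n ≫
        cokernel.π (kernel.lift (Moore.MooreD B n) (Moore.MooreD B (n + 1)) (Moore.d_squared B n))

/-- `f` is a homology isomorphism. -/
def IsHomologyIso {A B : SimplicialObject C} (f : A ⟶ B) : Prop :=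
  ∀ d : HMapData f, ∀ n : ℕ, IsIso (d.η n)

end HMapPart


section RegularPushoutAux

variable {C : Type u} [Category.{v} C]

theorem isRegEpi_epi {X Y : C} {f : X ⟶ Y} (h : IsRegEpi f) : Epi f := by
  obtain ⟨h⟩ := h
  haveI := isRegularEpi_of_regularEpi h
  infer_instance

theorem isRegEpi_comp_iso {X Y Z : C} {f : X ⟶ Y} (h : IsRegEpi f) (i : Y ⟶ Z) [IsIso i] :
    IsRegEpi (f ≫ i) := by
  obtain ⟨h⟩ := h
  refine ⟨⟨h.W, h.left, h.right, by rw [← Category.assoc, ← Category.assoc, h.w],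
    Cofork.IsColimit.ofExistsUnique fun s => ?_⟩⟩
  obtain ⟨d, hd⟩ := Cofork.IsColimit.desc' h.isColimit s.π s.condition
  simp only [Cofork.π_ofπ] at hd ⊢
  refine ⟨inv i ≫ d, by simp [hd], fun mm hmm => ?_⟩
  have hmm' : (f ≫ i) ≫ mm = s.π := hmm
  have : i ≫ mm = d := by
    apply Cofork.IsColimit.hom_ext h.isColimit
    simp only [Cofork.π_ofπ]
    rw [← Category.assoc, hmm', hd]
  rw [← this, IsIso.inv_hom_id_assoc]

theorem isRegEpi_iso_comp {X Y Z : C} (i : X ⟶ Y) {f : Y ⟶ Z} [IsIso i] (h : IsRegEpi f) :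
    IsRegEpi (i ≫ f) := by
  obtain ⟨h⟩ := h
  refine ⟨⟨h.W, h.left ≫ inv i, h.right ≫ inv i,
    by simp only [Category.assoc, IsIso.inv_hom_id_assoc, h.w],
    Cofork.IsColimit.ofExistsUnique fun s => ?_⟩⟩
  have hcond : h.left ≫ inv i ≫ s.π = h.right ≫ inv i ≫ s.π := by
    have := s.condition
    simpa only [Category.assoc] using this
  obtain ⟨d, hd⟩ := Cofork.IsColimit.desc' h.isColimit (inv i ≫ s.π) hcond
  simp only [Cofork.π_ofπ] at hd ⊢
  refine ⟨d, show (i ≫ f) ≫ d = s.π from by rw [Category.assoc, hd, IsIso.hom_inv_id_assoc],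
    fun mm hmm => ?_⟩
  have hmm' : (i ≫ f) ≫ mm = s.π := hmm
  apply Cofork.IsColimit.hom_ext h.isColimit
  simp only [Cofork.π_ofπ]
  rw [hd]
  rw [Category.assoc] at hmm'
  rw [← hmm', IsIso.inv_hom_id_assoc]

/-- If `e` is an epimorphism and `e ≫ g` is a regular epimorphism, then `g` is a
regular epimorphism. -/
theorem isRegEpi_of_epi_comp {X Y Z : C} (e : X ⟶ Y) {g : Y ⟶ Z} (he : Epi e)
    (h : IsRegEpi (e ≫ g)) : IsRegEpi g := by
  have hepi : Epi (e ≫ g) := isRegEpi_epi h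
  have hg : Epi g := @epi_of_epi _ _ _ _ _ e g hepi
  obtain ⟨h⟩ := h
  refine ⟨⟨h.W, h.left ≫ e, h.right ≫ e,
    by simp only [Category.assoc]; rw [h.w],
    Cofork.IsColimit.ofExistsUnique fun s => ?_⟩⟩
  have hcond : h.left ≫ e ≫ s.π = h.right ≫ e ≫ s.π := by
    have := s.condition
    simpa only [Category.assoc] using this
  obtain ⟨d, hd⟩ := Cofork.IsColimit.desc' h.isColimit (e ≫ s.π) hcond
  simp only [Cofork.π_ofπ] at hd ⊢
  have hfac : g ≫ d = s.π := by
    rw [Category.assoc] at hd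
    exact he.left_cancellation _ _ hd
  refine ⟨d, hfac, fun mm hmm => ?_⟩
  have hmm' : g ≫ mm = s.π := hmm
  exact hg.left_cancellation _ _ (hmm'.trans hfac.symm)

variable [HasZeroMorphisms C] [HasFiniteLimits C] [IsSemiAbelian C]

/-- Pullback stability of regular epimorphisms, for arbitrary pullback squares. -/
theorem isRegEpi_snd_of_isPullback {P X Y Z : C} {fst : P ⟶ X} {snd : P ⟶ Y}
    {f : X ⟶ Z} {g : Y ⟶ Z} (hp : IsPullback fst snd f g) (hf : IsRegEpi f) :
    IsRegEpi snd := by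
  have h := IsSemiAbelian.regularEpiPullbackStable f g hf
  rw [← hp.isoPullback_hom_snd]
  exact isRegEpi_iso_comp _ h

/-- (Regular epi, mono) factorization from the regular-category axioms. -/
theorem exists_regEpi_mono_fact {X Y : C} (g : X ⟶ Y) :
    ∃ (I : C) (e : X ⟶ I) (m : I ⟶ Y), IsRegEpi e ∧ Mono m ∧ e ≫ m = g := by
  haveI : HasColimit (parallelPair (pullback.fst g g) (pullback.snd g g)) :=
    IsSemiAbelian.hasCoequalizersOfKernelPairs g
  set a := pullback.fst g g with ha
  set b := pullback.snd g g with hb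
  let e : X ⟶ coequalizer a b := coequalizer.π a b
  let m : coequalizer a b ⟶ Y := coequalizer.desc g pullback.condition
  have hem : e ≫ m = g := coequalizer.π_desc _ _
  have he : IsRegEpi e := ⟨coequalizerRegular a b⟩
  refine ⟨coequalizer a b, e, m, he, ?_, hem⟩
  -- the two projections of the kernel pair of `m` agree
  let t1 : pullback g g ⟶ pullback g m :=
    pullback.lift a (b ≫ e) (by rw [Category.assoc, hem, pullback.condition])
  let t2 : pullback g m ⟶ pullback m m :=
    pullback.lift (pullback.fst g m ≫ e) (pullback.snd g m)
      (by rw [Category.assoc, hem, pullback.condition])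
  have ht1 : IsRegEpi t1 := by
    have hbig : IsPullback b (t1 ≫ pullback.fst g m) (e ≫ m) g := by
      have h1 : t1 ≫ pullback.fst g m = a := pullback.lift_fst _ _ _
      rw [h1, hem]
      exact (IsPullback.of_hasPullback g g).flip
    have hbot : IsPullback (pullback.snd g m) (pullback.fst g m) m g :=
      (IsPullback.of_hasPullback g m).flip
    have htop : IsPullback b t1 e (pullback.snd g m) :=
      IsPullback.of_bot hbig (pullback.lift_snd _ _ _).symm hbot
    exact isRegEpi_snd_of_isPullback htop he
  have ht2 : IsRegEpi t2 := by
    have hbig : IsPullback (pullback.fst g m) (t2 ≫ pullback.snd m m) (e ≫ m) m := by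
      have h1 : t2 ≫ pullback.snd m m = pullback.snd g m := pullback.lift_snd _ _ _
      rw [h1, hem]
      exact IsPullback.of_hasPullback g m
    have hbot : IsPullback (pullback.fst m m) (pullback.snd m m) m m :=
      IsPullback.of_hasPullback m m
    have htop : IsPullback (pullback.fst g m) t2 e (pullback.fst m m) :=
      IsPullback.of_bot hbig (pullback.lift_fst _ _ _).symm hbot
    exact isRegEpi_snd_of_isPullback htop he
  have hepit : Epi (t1 ≫ t2) := by
    have h1 : Epi t1 := isRegEpi_epi ht1
    have h2 : Epi t2 := isRegEpi_epi ht2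
    exact epi_comp _ _
  have hproj : pullback.fst m m = pullback.snd m m := by
    apply hepit.left_cancellation
    have hl : (t1 ≫ t2) ≫ pullback.fst m m = a ≫ e := by
      rw [Category.assoc]
      show t1 ≫ t2 ≫ pullback.fst m m = a ≫ e
      rw [pullback.lift_fst, ← Category.assoc, pullback.lift_fst]
    have hr : (t1 ≫ t2) ≫ pullback.snd m m = b ≫ e := by
      rw [Category.assoc]
      show t1 ≫ t2 ≫ pullback.snd m m = b ≫ e
      rw [pullback.lift_snd, pullback.lift_snd]
    rw [hl, hr]
    exact coequalizer.condition a b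
  constructor
  intro T p q hpq
  let l : T ⟶ pullback m m := pullback.lift p q hpq
  have hp : l ≫ pullback.fst m m = p := pullback.lift_fst _ _ _
  have hq : l ≫ pullback.snd m m = q := pullback.lift_snd _ _ _
  rw [← hp, ← hq, hproj]

end RegularPushoutAux

/-- In a semi-abelian category, a commutative square with horizontal regular
epimorphisms is a regular pushout iff the induced morphism on kernels is a regular
epimorphism. -/
theorem regular_pushout_iff_kernel_map_regular_epi
    {C : Type u} [Category.{v} C] [HasZeroMorphisms C] [HasFiniteLimits C] [IsSemiAbelian C]
    {A' B' A B : C} (f' : A' ⟶ B') (f : A ⟶ B) (v : A' ⟶ A) (w : B' ⟶ B)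
    (hf' : IsRegEpi f') (hf : IsRegEpi f) (sq : v ≫ f = f' ≫ w)
    (u : kernel f' ⟶ kernel f) (hu : u ≫ kernel.ι f = kernel.ι f' ≫ v) :
    IsRegEpi (pullback.lift v f' sq) ↔ IsRegEpi u := by
  set p₁ := pullback.fst f w with hp₁def
  set p₂ := pullback.snd f w with hp₂def
  set r : A' ⟶ pullback f w := pullback.lift v f' sq with hrdef
  have hrp₁ : r ≫ p₁ = v := pullback.lift_fst _ _ _
  have hrp₂ : r ≫ p₂ = f' := pullback.lift_snd _ _ _
  have hp₂ : IsRegEpi p₂ := IsSemiAbelian.regularEpiPullbackStable f w hf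
  -- the kernel of `p₂` is isomorphic to the kernel of `f`
  let φ : kernel p₂ ⟶ kernel f :=
    kernel.lift f (kernel.ι p₂ ≫ p₁)
      (by rw [Category.assoc, pullback.condition, ← Category.assoc, kernel.condition, zero_comp])
  have hφι : φ ≫ kernel.ι f = kernel.ι p₂ ≫ p₁ := kernel.lift_ι _ _ _
  let ψ₀ : kernel f ⟶ pullback f w :=
    pullback.lift (kernel.ι f) 0 (by rw [kernel.condition, zero_comp])
  let ψ : kernel f ⟶ kernel p₂ :=
    kernel.lift p₂ ψ₀ (pullback.lift_snd _ _ _)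
  have hψι : ψ ≫ kernel.ι p₂ = ψ₀ := kernel.lift_ι _ _ _
  have hφψ : φ ≫ ψ = 𝟙 _ := by
    rw [← cancel_mono (kernel.ι p₂), Category.assoc, hψι, Category.id_comp]
    apply pullback.hom_ext
    · rw [Category.assoc, pullback.lift_fst, hφι]
    · rw [Category.assoc, pullback.lift_snd, comp_zero, kernel.condition]
  have hψφ : ψ ≫ φ = 𝟙 _ := by
    rw [← cancel_mono (kernel.ι f), Category.assoc, hφι, ← Category.assoc, hψι,
      pullback.lift_fst, Category.id_comp]
  haveI : IsIso φ := ⟨ψ, hφψ, hψφ⟩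
  -- the induced map `u' : K[f'] ⟶ K[p₂]`
  let u' : kernel f' ⟶ kernel p₂ :=
    kernel.lift p₂ (kernel.ι f' ≫ r)
      (by rw [Category.assoc, hrp₂, kernel.condition])
  have hu'ι : u' ≫ kernel.ι p₂ = kernel.ι f' ≫ r := kernel.lift_ι _ _ _
  have huu' : u = u' ≫ φ := by
    rw [← cancel_mono (kernel.ι f), hu, Category.assoc, hφι, ← Category.assoc, hu'ι,
      Category.assoc, hrp₁]
  -- the square `K[f'] → A' → P ← K[p₂]` is a pullback
  have hPB : IsPullback (kernel.ι f') u' r (kernel.ι p₂) := by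
    refine IsPullback.of_isLimit (PullbackCone.IsLimit.mk (hu'ι.symm)
      (fun s => kernel.lift f' s.fst ?_) (fun s => kernel.lift_ι _ _ _) (fun s => ?_)
      (fun s mm hm₁ _ => ?_))
    · rw [← hrp₂, ← Category.assoc, s.condition, Category.assoc, kernel.condition, comp_zero]
    · rw [← cancel_mono (kernel.ι p₂), Category.assoc, hu'ι, ← Category.assoc,
        kernel.lift_ι, s.condition]
    · rw [← cancel_mono (kernel.ι f'), kernel.lift_ι, hm₁]
  constructor
  · -- regular pushout ⟹ kernel map regular epi
    intro hr
    have hu' : IsRegEpi u' := isRegEpi_snd_of_isPullback hPB hr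
    rw [huu']
    exact isRegEpi_comp_iso hu' φ
  · -- kernel map regular epi ⟹ regular pushout
    intro hureg
    have hu' : IsRegEpi u' := by
      have : u' = u ≫ inv φ := by rw [huu', Category.assoc, IsIso.hom_inv_id, Category.comp_id]
      rw [this]
      exact isRegEpi_comp_iso hureg (inv φ)
    obtain ⟨I, e, m, he, hm, hem⟩ := exists_regEpi_mono_fact r
    set g : I ⟶ B' := m ≫ p₂ with hgdef
    have heg : e ≫ g = f' := by rw [hgdef, ← Category.assoc, hem, hrp₂]
    have hg : IsRegEpi g := by
      refine isRegEpi_of_epi_comp e (isRegEpi_epi he) ?_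
      rw [heg]; exact hf'
    let κ : kernel g ⟶ kernel p₂ :=
      kernel.lift p₂ (kernel.ι g ≫ m)
        (by rw [Category.assoc, ← hgdef, kernel.condition])
    have hκι : κ ≫ kernel.ι p₂ = kernel.ι g ≫ m := kernel.lift_ι _ _ _
    haveI hκm : Mono κ := by
      haveI : Mono (κ ≫ kernel.ι p₂) := by rw [hκι]; exact mono_comp _ _
      exact mono_of_mono κ (kernel.ι p₂)
    let lam : kernel f' ⟶ kernel g :=
      kernel.lift g (kernel.ι f' ≫ e)
        (by rw [Category.assoc, heg, kernel.condition])
    have hlamκ : lam ≫ κ = u' := by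
      rw [← cancel_mono (kernel.ι p₂), Category.assoc, hκι, ← Category.assoc,
        kernel.lift_ι, Category.assoc, hem, hu'ι]
    haveI : StrongEpi κ := by
      obtain ⟨hreg⟩ := hu'
      haveI := isRegularEpi_of_regularEpi hreg
      have hse : StrongEpi (lam ≫ κ) := by rw [hlamκ]; infer_instance
      exact @strongEpi_of_strongEpi _ _ _ _ _ lam κ hse
    haveI : IsIso κ := isIso_of_mono_of_strongEpi κ
    have hmiso : IsIso m :=
      IsSemiAbelian.protomodular g p₂ hg hp₂ m (𝟙 B')
        (by rw [Category.comp_id, hgdef]) κ hκι ‹IsIso κ› (by infer_instance)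
    haveI := hmiso
    rw [← hem]
    exact isRegEpi_comp_iso he m

end SemiAbPaper
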